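/- Let M be a nonempty set and P : M × [0, ∞) → ℝ with P ≥ 0. Let T₁ > 0, δ ∈ [0, 1), x₀ ∈ M, and t₀ ∈ (0, T₁) with Q := P(x₀, t₀) > 0, and suppose that (1 − δ) · s (T₁ − s) P(x, s) ≤ t₀ (T₁ − t₀) Q for all x ∈ M and all s ∈ [0, T₁]. Set α := t₀ · Q and ω := (T₁ − t₀) · Q. Then for every x ∈ M and every t ∈ (−α, ω), the rescaled function satisfies P_Q(x, t) ≤ (1/(1 − δ)) · (α/(α + t)) · (ω/(ω − t)). -/

import Mathlib

/-- Type IIb curvature bound on the dilated solutions: if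
`(1-δ) s(T₁-s) P(x,s) ≤ t₀(T₁-t₀) Q` for all `x ∈ M`, `s ∈ [0, T₁]`, with
`Q := P(x₀,t₀) > 0`, `α := t₀ Q`, `ω := (T₁-t₀) Q`, then the rescaled function
`P_Q(x,t) = P(x, t₀ + t/Q)/Q` satisfies
`P_Q(x,t) ≤ (1/(1-δ)) (α/(α+t)) (ω/(ω-t))` for all `t ∈ (-α, ω)`. -/
theorem stmt7 (M : Type*) [Nonempty M]
    (P : M → ℝ → ℝ)
    (hP : ∀ (x : M) (t : ℝ), 0 ≤ t → 0 ≤ P x t)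
    (T₁ : ℝ) (hT₁ : 0 < T₁) (δ : ℝ) (hδ : δ ∈ Set.Ico (0:ℝ) 1)
    (x₀ : M) (t₀ : ℝ) (ht₀ : t₀ ∈ Set.Ioo (0:ℝ) T₁) (hQ : 0 < P x₀ t₀)
    (hbound : ∀ (x : M), ∀ s ∈ Set.Icc (0:ℝ) T₁,
      (1 - δ) * (s * (T₁ - s) * P x s) ≤ t₀ * (T₁ - t₀) * P x₀ t₀) :
    ∀ (x : M), ∀ t ∈ Set.Ioo (-(t₀ * P x₀ t₀)) ((T₁ - t₀) * P x₀ t₀),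
      P x (t₀ + t / P x₀ t₀) / P x₀ t₀ ≤
        (1 / (1 - δ)) * (t₀ * P x₀ t₀ / (t₀ * P x₀ t₀ + t)) *
          ((T₁ - t₀) * P x₀ t₀ / ((T₁ - t₀) * P x₀ t₀ - t)) := by
  intro x t ht
  obtain ⟨ht1, ht2⟩ := ht
  obtain ⟨ht01, ht02⟩ := ht₀
  obtain ⟨hδ0, hδ1⟩ := hδ
  set Q := P x₀ t₀ with hQdef
  have h1δ : 0 < 1 - δ := by linarith
  have hA : 0 < t₀ * Q + t := by linarith
  have hB : 0 < (T₁ - t₀) * Q - t := by linarith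
  set s := t₀ + t / Q with hs
  have hsA : s = (t₀ * Q + t) / Q := by
    rw [hs, eq_div_iff hQ.ne', add_mul, div_mul_cancel₀ _ hQ.ne']
  have hsB : T₁ - s = ((T₁ - t₀) * Q - t) / Q := by
    rw [hs, eq_div_iff hQ.ne', sub_mul, add_mul, div_mul_cancel₀ _ hQ.ne']; ring
  have hs0 : 0 < s := by rw [hsA]; positivity
  have hsT : s < T₁ := by
    have : 0 < T₁ - s := by rw [hsB]; positivity
    linarith
  have hb := hbound x s ⟨le_of_lt hs0, le_of_lt hsT⟩
  have hPx : 0 ≤ P x s := hP x s hs0.le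
  rw [div_le_iff₀ hQ]
  rw [div_mul_div_comm, div_mul_div_comm, div_mul_eq_mul_div, le_div_iff₀ (by positivity)]
  have hb' : (1 - δ) * ((t₀ * Q + t) * ((T₁ - t₀) * Q - t) * P x s)
      ≤ t₀ * (T₁ - t₀) * Q * (Q * Q) := by
    calc (1 - δ) * ((t₀ * Q + t) * ((T₁ - t₀) * Q - t) * P x s)
        = (1 - δ) * (s * (T₁ - s) * P x s) * (Q * Q) := by
          rw [hsB, hsA]; field_simp
      _ ≤ t₀ * (T₁ - t₀) * Q * (Q * Q) :=
          mul_le_mul_of_nonneg_right hb (by positivity)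
  nlinarith [hb', mul_pos hA hB, hQ]
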